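/- Let t ≥ 3 be an integer, let R = K[x,y,z] be the polynomial ring in three variables over a field K, and let I = (x^t, x y^{t−2} z, y^{t−1} z). Then for every integer s ≥ 1, (I^s : z) + (y^{t−2}) = (x^{ts}) + (y^{t−2}). -/

import Mathlib

open MvPolynomial

section aux

variable {K : Type*} [Field K]

/-- The key "z is a nonzerodivisor mod the monomial ideal (x^a, y^b)" step. -/
lemma aux_cancel_z (a b : ℕ) (f : MvPolynomial (Fin 3) K)
    (h : f * X 2 ∈ Ideal.span {(X 0 : MvPolynomial (Fin 3) K) ^ a, (X 1 : MvPolynomial (Fin 3) K) ^ b}) :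
    f ∈ Ideal.span {(X 0 : MvPolynomial (Fin 3) K) ^ a, (X 1 : MvPolynomial (Fin 3) K) ^ b} := by
  have hrw : ({(X 0 : MvPolynomial (Fin 3) K) ^ a, (X 1 : MvPolynomial (Fin 3) K) ^ b} : Set (MvPolynomial (Fin 3) K))
      = (fun s => monomial s (1 : K)) '' {Finsupp.single 0 a, Finsupp.single 1 b} := by
    rw [Set.image_pair, X_pow_eq_monomial, X_pow_eq_monomial]
  rw [hrw] at h ⊢
  rw [mem_ideal_span_monomial_image] at h ⊢
  intro m hm
  have hm' : m + Finsupp.single 2 1 ∈ (f * X 2).support := by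
    rw [support_mul_X]
    exact Finset.mem_map_of_mem _ hm
  obtain ⟨si, hsi, hle⟩ := h _ hm'
  refine ⟨si, hsi, ?_⟩
  rcases hsi with h0 | h1
  · subst h0
    rw [Finsupp.single_le_iff] at hle ⊢
    simpa using hle
  · rw [Set.mem_singleton_iff] at h1; subst h1
    rw [Finsupp.single_le_iff] at hle ⊢
    simpa using hle

lemma aux_pow_le (t s : ℕ) (ht : 3 ≤ t) (hs : 1 ≤ s) :
    (Ideal.span {(X 0 : MvPolynomial (Fin 3) K) ^ t,
            (X 0 : MvPolynomial (Fin 3) K) * X 1 ^ (t - 2) * X 2,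
            (X 1 : MvPolynomial (Fin 3) K) ^ (t - 1) * X 2}) ^ s
      ≤ Ideal.span {(X 0 : MvPolynomial (Fin 3) K) ^ (t * s)}
        ⊔ Ideal.span {(X 1 : MvPolynomial (Fin 3) K) ^ (t - 2)} := by
  set A : Ideal (MvPolynomial (Fin 3) K) := Ideal.span {(X 0 : MvPolynomial (Fin 3) K) ^ t}
  set P : Ideal (MvPolynomial (Fin 3) K) := Ideal.span {(X 1 : MvPolynomial (Fin 3) K) ^ (t - 2)}
  have hIle : Ideal.span {(X 0 : MvPolynomial (Fin 3) K) ^ t,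
            (X 0 : MvPolynomial (Fin 3) K) * X 1 ^ (t - 2) * X 2,
            (X 1 : MvPolynomial (Fin 3) K) ^ (t - 1) * X 2} ≤ A ⊔ P := by
    rw [Ideal.span_le]
    rintro p (h0 | h1 | h2)
    · subst h0
      exact Ideal.mem_sup_left (Ideal.subset_span rfl)
    · subst h1
      refine Ideal.mem_sup_right (Ideal.mem_span_singleton.mpr ⟨X 0 * X 2, by ring⟩)
    · rw [Set.mem_singleton_iff] at h2; subst h2
      refine Ideal.mem_sup_right (Ideal.mem_span_singleton.mpr ⟨X 1 * X 2, ?_⟩)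
      have h : t - 1 = (t - 2) + 1 := by omega
      rw [h, pow_succ]; ring
  have key : ∀ n : ℕ, 1 ≤ n → (A ⊔ P) ^ n ≤ A ^ n ⊔ P := by
    intro n hn
    induction n with
    | zero => omega
    | succ m ih =>
      rcases Nat.eq_or_lt_of_le hn with h1 | h1
      · simp [← h1]
      · have hm : 1 ≤ m := by omega
        calc (A ⊔ P) ^ (m + 1) = (A ⊔ P) ^ m * (A ⊔ P) := pow_succ _ _
          _ ≤ (A ^ m ⊔ P) * (A ⊔ P) := Ideal.mul_mono_left (ih hm)
          _ ≤ A ^ (m + 1) ⊔ P := by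
              rw [Ideal.sup_mul, Ideal.mul_sup, Ideal.mul_sup]
              refine sup_le (sup_le ?_ ?_) (sup_le ?_ ?_)
              · rw [← pow_succ]; exact le_sup_left
              · exact le_trans Ideal.mul_le_right le_sup_right
              · exact le_trans Ideal.mul_le_left le_sup_right
              · exact le_trans Ideal.mul_le_right le_sup_right
  calc _ ≤ (A ⊔ P) ^ s := Ideal.pow_right_mono hIle s
    _ ≤ A ^ s ⊔ P := key s hs
    _ = Ideal.span {(X 0 : MvPolynomial (Fin 3) K) ^ (t * s)} ⊔ P := by
        rw [show A ^ s = Ideal.span {((X 0 : MvPolynomial (Fin 3) K) ^ t) ^ s} from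
          Ideal.span_singleton_pow _ _, ← pow_mul]

end aux

/-- Let `t ≥ 3`, `R = K[x,y,z]` and
`I = (x^t, x y^{t-2} z, y^{t-1} z)`.  Then for every `s ≥ 1`,
`(I^s : z) + (y^{t-2}) = (x^{ts}) + (y^{t-2})`.
Here `x = X 0`, `y = X 1`, `z = X 2`. -/
theorem colon_z_add_y_eq
    {K : Type*} [Field K] (t : ℕ) (ht : 3 ≤ t) (s : ℕ) (hs : 1 ≤ s) :
    ((Ideal.span {(X 0 : MvPolynomial (Fin 3) K) ^ t,
            (X 0 : MvPolynomial (Fin 3) K) * X 1 ^ (t - 2) * X 2,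
            (X 1 : MvPolynomial (Fin 3) K) ^ (t - 1) * X 2}) ^ s).colon
          (Ideal.span {(X 2 : MvPolynomial (Fin 3) K)})
        + Ideal.span {(X 1 : MvPolynomial (Fin 3) K) ^ (t - 2)}
      = Ideal.span {(X 0 : MvPolynomial (Fin 3) K) ^ (t * s)}
        + Ideal.span {(X 1 : MvPolynomial (Fin 3) K) ^ (t - 2)} := by
  rw [Submodule.add_eq_sup, Submodule.add_eq_sup]
  apply le_antisymm
  · refine sup_le ?_ le_sup_right
    intro f hf
    rw [Ideal.mem_colon_span_singleton] at hf
    have h1 : f * X 2 ∈ Ideal.span {(X 0 : MvPolynomial (Fin 3) K) ^ (t * s),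
        (X 1 : MvPolynomial (Fin 3) K) ^ (t - 2)} := by
      have := aux_pow_le (K := K) t s ht hs hf
      rwa [← Ideal.span_union, Set.singleton_union] at this
    have h2 := aux_cancel_z (t * s) (t - 2) f h1
    rwa [show ({(X 0 : MvPolynomial (Fin 3) K) ^ (t * s),
        (X 1 : MvPolynomial (Fin 3) K) ^ (t - 2)} : Set (MvPolynomial (Fin 3) K))
        = {(X 0 : MvPolynomial (Fin 3) K) ^ (t * s)} ∪ {(X 1 : MvPolynomial (Fin 3) K) ^ (t - 2)}
        from (Set.singleton_union).symm, Ideal.span_union] at h2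
  · refine sup_le ?_ le_sup_right
    rw [Ideal.span_le, Set.singleton_subset_iff]
    apply Ideal.mem_sup_left
    rw [Ideal.mem_colon_span_singleton]
    have hmem : (X 0 : MvPolynomial (Fin 3) K) ^ (t * s) ∈
        (Ideal.span {(X 0 : MvPolynomial (Fin 3) K) ^ t,
            (X 0 : MvPolynomial (Fin 3) K) * X 1 ^ (t - 2) * X 2,
            (X 1 : MvPolynomial (Fin 3) K) ^ (t - 1) * X 2}) ^ s := by
      rw [pow_mul]
      exact Ideal.pow_mem_pow (Ideal.subset_span (Set.mem_insert _ _)) s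
    exact Ideal.mul_mem_right _ _ hmem
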